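/- Let $n\in\mathbb{N}$, $\mathbb{F}=\mathbb{F}_4$, and let $H$, $M$, $N$, $G=HM$ be the subgroups of $\mathrm{SL}_{2n}(\mathbb{F})$ defined below. Then $N$ is a normal subgroup of $G$, and for every $d$ with $1\leq d<n$, the subgroup $\gamma_d(N)$ strictly contains $[G,{}^dN]$. -/

import Mathlib

/-- The group `SL₂ₙ(F)`, with rows and columns indexed by `Fin n × Fin 2`, so that
its elements can be viewed as `n × n` block matrices with `2 × 2` blocks. -/
abbrev SL2n (F : Type*) [Field F] [Fintype F] (n : ℕ) : Type _ :=
  Matrix.SpecialLinearGroup (Fin n × Fin 2) F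

/-- The `2 × 2` block of a `2n × 2n` matrix in block position `(i, j)`. -/
def blockOf {F : Type*} [Field F] {n : ℕ}
    (X : Matrix (Fin n × Fin 2) (Fin n × Fin 2) F) (i j : Fin n) :
    Matrix (Fin 2) (Fin 2) F :=
  Matrix.of fun a b => X (i, a) (j, b)

/-- The subgroup `H` of `SL₂ₙ(F)`: block diagonal matrices `Δ(A) = diag(A, …, A)`
with `A ∈ SL₂(F)`. -/
def HsetN (F : Type*) [Field F] [Fintype F] (n : ℕ) : Set (SL2n F n) :=
  {X | ∃ A : Matrix.SpecialLinearGroup (Fin 2) F, ∀ i j : Fin n,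
    blockOf (X : Matrix (Fin n × Fin 2) (Fin n × Fin 2) F) i j =
      if i = j then (A : Matrix (Fin 2) (Fin 2) F) else 0}

/-- The subgroup `M` of `SL₂ₙ(F)`: block upper unitriangular matrices `(A_{ij})`
with `A_{ii} = I`, trace-zero blocks `A_{i,i+1}` on the superdiagonal, arbitrary
blocks above that, and zero blocks below the diagonal. -/
def MsetN (F : Type*) [Field F] [Fintype F] (n : ℕ) : Set (SL2n F n) :=
  {X | (∀ i : Fin n,
          blockOf (X : Matrix (Fin n × Fin 2) (Fin n × Fin 2) F) i i = 1) ∧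
       (∀ i j : Fin n, (j : ℕ) = (i : ℕ) + 1 →
          (blockOf (X : Matrix (Fin n × Fin 2) (Fin n × Fin 2) F) i j).trace = 0) ∧
       (∀ i j : Fin n, (j : ℕ) < (i : ℕ) →
          blockOf (X : Matrix (Fin n × Fin 2) (Fin n × Fin 2) F) i j = 0)}

/-- The subgroup `N` of `SL₂ₙ(F)`: elements of `M` whose superdiagonal blocks are
scalar matrices `a_i • I`. -/
def NsetN (F : Type*) [Field F] [Fintype F] (n : ℕ) : Set (SL2n F n) :=
  {X | (∀ i : Fin n,
          blockOf (X : Matrix (Fin n × Fin 2) (Fin n × Fin 2) F) i i = 1) ∧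
       (∀ i j : Fin n, (j : ℕ) = (i : ℕ) + 1 → ∃ a : F,
          blockOf (X : Matrix (Fin n × Fin 2) (Fin n × Fin 2) F) i j =
            a • (1 : Matrix (Fin 2) (Fin 2) F)) ∧
       (∀ i j : Fin n, (j : ℕ) < (i : ℕ) →
          blockOf (X : Matrix (Fin n × Fin 2) (Fin n × Fin 2) F) i j = 0)}

/-- The group `G = HM`, i.e. the subgroup of `SL₂ₙ(F)` generated by `H ∪ M`. -/
def GsubN (F : Type*) [Field F] [Fintype F] (n : ℕ) : Subgroup (SL2n F n) :=
  Subgroup.closure (HsetN F n ∪ MsetN F n)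

/-- The left-normed iterated commutator subgroup `[G, ᵐN]` for subgroups `G, N` of
an ambient group: `[G, ⁰N] = G` and `[G, ᵐ⁺¹N] = [[G, ᵐN], N]`. -/
def iterCommG {P : Type*} [Group P] (G N : Subgroup P) : ℕ → Subgroup P
  | 0 => G
  | m + 1 => ⁅iterCommG G N m, N⁆

/-- The lower central series of a subgroup `N`, as subgroups of the ambient group:
`γ₁(N) = N` is `gammaN N 0`, and `γ_{k+1}(N) = [γ_k(N), N]` is `gammaN N k`. -/
def gammaN {P : Type*} [Group P] (N : Subgroup P) : ℕ → Subgroup P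
  | 0 => N
  | k + 1 => ⁅gammaN N k, N⁆


namespace SLaux

open scoped commutatorElement

section grp
variable {P : Type*} [Group P] [Finite P]

def setSubgroup (S : Set P) (h1 : (1:P) ∈ S)
    (hm : ∀ x ∈ S, ∀ y ∈ S, x * y ∈ S) : Subgroup P where
  carrier := S
  one_mem' := h1
  mul_mem' := fun ha hb => hm _ ha _ hb
  inv_mem' := by
    intro x hx
    have hpow : ∀ m : ℕ, x ^ m ∈ S := by
      intro m; induction m with
      | zero => simpa using h1
      | succ m ih => rw [pow_succ]; exact hm _ ih _ hx
    have hk : 0 < orderOf x := orderOf_pos x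
    have hinv : x⁻¹ = x ^ (orderOf x - 1) := by
      apply inv_eq_of_mul_eq_one_right
      rw [← pow_succ', Nat.sub_add_cancel hk, pow_orderOf_eq_one]
    rw [hinv]; exact hpow _

lemma coe_closure_setSubgroup (S : Set P) (h1 : (1:P) ∈ S)
    (hm : ∀ x ∈ S, ∀ y ∈ S, x * y ∈ S) :
    (Subgroup.closure S : Set P) = S := by
  have h : Subgroup.closure S = setSubgroup S h1 hm :=
    le_antisymm ((Subgroup.closure_le _).mpr (fun x hx => hx))
      (fun x hx => Subgroup.subset_closure hx)
  rw [h]; rfl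

lemma inv_mem_of_set (S : Set P) (h1 : (1:P) ∈ S)
    (hm : ∀ x ∈ S, ∀ y ∈ S, x * y ∈ S) {x : P} (hx : x ∈ S) : x⁻¹ ∈ S :=
  (setSubgroup S h1 hm).inv_mem hx

end grp


variable {F : Type*} [Field F] [Fintype F] {n : ℕ}

abbrev Mat (F : Type*) [Field F] (n : ℕ) := Matrix (Fin n × Fin 2) (Fin n × Fin 2) F

instance : Finite (SL2n F n) :=
  Finite.of_injective (fun g => (g : Mat F n)) (fun a b h => Subtype.ext h)

@[simp] lemma blockOf_apply (X : Mat F n) (i j : Fin n) (a b : Fin 2) :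
    blockOf X i j a b = X (i, a) (j, b) := rfl

lemma blockOf_ext {X Y : Mat F n} (h : ∀ i j, blockOf X i j = blockOf Y i j) : X = Y := by
  ext ⟨i, a⟩ ⟨j, b⟩
  exact congrFun (congrFun (h i j) a) b

lemma blockOf_mul (X Y : Mat F n) (i j : Fin n) :
    blockOf (X * Y) i j = ∑ k, blockOf X i k * blockOf Y k j := by
  ext a b
  simp only [blockOf_apply, Matrix.mul_apply, Matrix.sum_apply, Fintype.sum_prod_type]

lemma blockOf_one (i j : Fin n) :
    blockOf (1 : Mat F n) i j = if i = j then 1 else 0 := by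
  ext a b
  by_cases h : i = j <;> simp [Matrix.one_apply, h, Prod.ext_iff]

/-- block of an SL element -/
def bk (x : SL2n F n) (i j : Fin n) : Matrix (Fin 2) (Fin 2) F :=
  blockOf (x : Mat F n) i j

lemma bk_mul (x y : SL2n F n) (i j : Fin n) :
    bk (x * y) i j = ∑ k, bk x i k * bk y k j := by
  unfold bk
  rw [Matrix.SpecialLinearGroup.coe_mul, blockOf_mul]

lemma bk_one (i j : Fin n) : bk (1 : SL2n F n) i j = if i = j then 1 else 0 := by
  unfold bk
  rw [Matrix.SpecialLinearGroup.coe_one, blockOf_one]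

lemma fin_vne {i j : Fin n} (h : i ≠ j) : (i:ℕ) ≠ (j:ℕ) := fun hv => h (Fin.val_injective hv)

def Zset (F : Type*) [Field F] [Fintype F] (n e : ℕ) : Set (SL2n F n) :=
  {x | (∀ i, bk x i i = 1) ∧
       ∀ i j : Fin n, i ≠ j → (j : ℕ) ≤ (i : ℕ) + e → bk x i j = 0}

lemma Zset_mono {e e' : ℕ} (h : e' ≤ e) : Zset F n e ⊆ Zset F n e' :=
  fun _ hx => ⟨hx.1, fun i j hij hle => hx.2 i j hij (by omega)⟩

lemma Zset_one (e : ℕ) : (1 : SL2n F n) ∈ Zset F n e := by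
  constructor
  · intro i; rw [bk_one, if_pos rfl]
  · intro i j hij _; rw [bk_one, if_neg hij]

lemma Zset_mul {e : ℕ} {x y : SL2n F n} (hx : x ∈ Zset F n e) (hy : y ∈ Zset F n e) :
    x * y ∈ Zset F n e := by
  obtain ⟨hxd, hxo⟩ := hx; obtain ⟨hyd, hyo⟩ := hy
  constructor
  · intro i
    rw [bk_mul, Finset.sum_eq_single i]
    · rw [hxd, hyd, one_mul]
    · intro k _ hk
      by_cases h : (k:ℕ) ≤ (i:ℕ) + e
      · rw [hxo i k (fun h' => hk h'.symm) h, zero_mul]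
      · rw [hyo k i hk (by omega), mul_zero]
    · intro h; exact absurd (Finset.mem_univ i) h
  · intro i j hij hle
    rw [bk_mul]
    apply Finset.sum_eq_zero
    intro k _
    by_cases hki : k = i
    · subst hki; rw [hyo _ _ hij hle, mul_zero]
    · by_cases h : (k:ℕ) ≤ (i:ℕ) + e
      · rw [hxo i k (fun h' => hki h'.symm) h, zero_mul]
      · have hkj : k ≠ j := fun h' => absurd (congrArg Fin.val h') (by omega)
        rw [hyo k j hkj (by omega), mul_zero]

lemma Zset_inv {e : ℕ} {x : SL2n F n} (hx : x ∈ Zset F n e) : x⁻¹ ∈ Zset F n e :=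
  inv_mem_of_set _ (Zset_one e) (fun _ ha _ hb => Zset_mul ha hb) hx

lemma superdiag_add {x y : SL2n F n} (hx : x ∈ Zset F n 0) (hy : y ∈ Zset F n 0)
    {i j : Fin n} (hj : (j:ℕ) = (i:ℕ) + 1) :
    bk (x * y) i j = bk x i j + bk y i j := by
  have hij : i ≠ j := fun h => by rw [h] at hj; omega
  rw [bk_mul, ← Finset.sum_subset (Finset.subset_univ {i, j})]
  · rw [Finset.sum_pair hij, hx.1 i, hy.1 j, one_mul, mul_one, add_comm]
  · intro k _ hk
    simp only [Finset.mem_insert, Finset.mem_singleton] at hk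
    push_neg at hk
    obtain ⟨hki, hkj⟩ := hk
    by_cases h : (k:ℕ) ≤ (i:ℕ)
    · rw [hx.2 i k (fun h' => hki h'.symm) h, zero_mul]
    · rw [hy.2 k j hkj (by omega), mul_zero]

lemma agree_mul_inv_mem {e : ℕ} {x y : SL2n F n} (hx : x ∈ Zset F n 0) (hy : y ∈ Zset F n 0)
    (h : ∀ i j : Fin n, (j:ℕ) ≤ (i:ℕ) + e → bk x i j = bk y i j) :
    x * y⁻¹ ∈ Zset F n e := by
  have hyi : y⁻¹ ∈ Zset F n 0 := Zset_inv hy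
  have key : ∀ i j : Fin n, (j:ℕ) ≤ (i:ℕ) + e →
      bk (x * y⁻¹) i j = (if i = j then 1 else 0) := by
    intro i j hle
    have h2 : bk (x * y⁻¹) i j = bk (y * y⁻¹) i j := by
      rw [bk_mul, bk_mul]
      apply Finset.sum_congr rfl
      intro k _
      by_cases hkj : (k:ℕ) ≤ (j:ℕ)
      · rw [h i k (by omega)]
      · have hne : k ≠ j := fun h' => absurd (congrArg Fin.val h') (by omega)
        rw [hyi.2 k j hne (by omega), mul_zero, mul_zero]
    rw [h2, mul_inv_cancel, bk_one]
  constructor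
  · intro i; rw [key i i (by omega), if_pos rfl]
  · intro i j hij hle; rw [key i j hle, if_neg hij]

lemma comm_mem_Zset {d : ℕ} {a b : SL2n F n} (ha : a ∈ Zset F n d) (hb : b ∈ Zset F n 0) :
    ⁅a, b⁆ ∈ Zset F n (d + 1) := by
  have ha0 : a ∈ Zset F n 0 := Zset_mono (Nat.zero_le d) ha
  have hab : a * b ∈ Zset F n 0 := Zset_mul ha0 hb
  have hba : b * a ∈ Zset F n 0 := Zset_mul hb ha0
  have agree : ∀ i j : Fin n, (j:ℕ) ≤ (i:ℕ) + (d+1) → bk (a*b) i j = bk (b*a) i j := by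
    intro i j hle
    rw [bk_mul, bk_mul,
        ← Finset.sum_subset (Finset.subset_univ ({i, j} : Finset (Fin n))),
        ← Finset.sum_subset (Finset.subset_univ ({i, j} : Finset (Fin n)))]
    · by_cases hij : i = j
      · subst hij
        simp only [Finset.pair_eq_singleton, Finset.sum_singleton]
        rw [ha0.1 i, hb.1 i]
      · rw [Finset.sum_pair hij, Finset.sum_pair hij,
            ha0.1 i, ha0.1 j, hb.1 i, hb.1 j, one_mul, one_mul, mul_one, mul_one, add_comm]
    · -- second sum (b * a) zero terms
      intro k _ hk
      simp only [Finset.mem_insert, Finset.mem_singleton] at hk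
      push_neg at hk
      obtain ⟨hki, hkj⟩ := hk
      by_cases h : (j:ℕ) ≤ (k:ℕ) + d
      · rw [ha.2 k j hkj h, mul_zero]
      · rw [hb.2 i k (fun h' => hki h'.symm) (by omega), zero_mul]
    · -- first sum (a * b) zero terms
      intro k _ hk
      simp only [Finset.mem_insert, Finset.mem_singleton] at hk
      push_neg at hk
      obtain ⟨hki, hkj⟩ := hk
      by_cases h : (k:ℕ) ≤ (i:ℕ) + d
      · rw [ha.2 i k (fun h' => hki h'.symm) h, zero_mul]
      · rw [hb.2 k j hkj (by omega), mul_zero]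
  have hc : ⁅a, b⁆ = (a * b) * (b * a)⁻¹ := by group
  rw [hc]
  exact agree_mul_inv_mem hab hba agree

lemma mem_Nset_iff {x : SL2n F n} : x ∈ NsetN F n ↔
    (∀ i, bk x i i = 1) ∧
    (∀ i j : Fin n, (j:ℕ) = (i:ℕ) + 1 → ∃ a : F, bk x i j = a • 1) ∧
    (∀ i j : Fin n, (j:ℕ) < (i:ℕ) → bk x i j = 0) := Iff.rfl

lemma Nset_subset_Z0 : NsetN F n ⊆ Zset F n 0 := by
  rintro x ⟨hd, _, hb⟩
  exact ⟨hd, fun i j hij hle => hb i j (by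
    have := fun hv => hij (Fin.val_injective hv)
    omega)⟩

/-- conjugation property -/
def Pconj (g : SL2n F n) : Prop := ∀ x ∈ NsetN F n, g * x * g⁻¹ ∈ NsetN F n ∧
  ∀ i j : Fin n, (j:ℕ) = (i:ℕ) + 1 → bk (g * x * g⁻¹) i j = bk x i j

lemma Pconj_one : Pconj (1 : SL2n F n) := by
  intro x hx
  constructor
  · simpa using hx
  · intro i j _; rw [one_mul, inv_one, mul_one]

lemma Pconj_mul {g h : SL2n F n} (hg : Pconj g) (hh : Pconj h) : Pconj (g * h) := by
  intro x hx
  have key : (g * h) * x * (g * h)⁻¹ = g * (h * x * h⁻¹) * g⁻¹ := by group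
  rw [key]
  obtain ⟨hm, he⟩ := hh x hx
  obtain ⟨hm2, he2⟩ := hg _ hm
  refine ⟨hm2, fun i j hj => ?_⟩
  rw [he2 i j hj, he i j hj]

lemma Pconj_of_Z0 {g : SL2n F n} (hg : g ∈ Zset F n 0) : Pconj g := by
  intro x hx
  have hx0 : x ∈ Zset F n 0 := Nset_subset_Z0 hx
  have hgi : g⁻¹ ∈ Zset F n 0 := Zset_inv hg
  have hgx : g * x ∈ Zset F n 0 := Zset_mul hg hx0
  have hall : g * x * g⁻¹ ∈ Zset F n 0 := Zset_mul hgx hgi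
  have hsup : ∀ i j : Fin n, (j:ℕ) = (i:ℕ) + 1 → bk (g * x * g⁻¹) i j = bk x i j := by
    intro i j hj
    have hij : i ≠ j := fun h => by rw [h] at hj; omega
    have h0 : bk g i j + bk g⁻¹ i j = 0 := by
      rw [← superdiag_add hg hgi hj, mul_inv_cancel, bk_one, if_neg hij]
    rw [superdiag_add hgx hgi hj, superdiag_add hg hx0 hj, add_right_comm, h0, zero_add]
  refine ⟨?_, hsup⟩
  rw [mem_Nset_iff]
  refine ⟨hall.1, fun i j hj => ?_, fun i j hj => hall.2 i j
    (fun h => by rw [h] at hj; omega) (by omega)⟩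
  obtain ⟨a, ha⟩ := hx.2.1 i j hj
  exact ⟨a, by rw [hsup i j hj]; exact ha⟩

lemma Pconj_of_H {g : SL2n F n} (hg : g ∈ HsetN F n) : Pconj g := by
  obtain ⟨A, hA⟩ := hg
  set B : Matrix (Fin 2) (Fin 2) F := ((A⁻¹ : Matrix.SpecialLinearGroup (Fin 2) F) : Matrix (Fin 2) (Fin 2) F) with hB
  have hAB : (A : Matrix (Fin 2) (Fin 2) F) * B = 1 := by
    rw [hB, ← Matrix.SpecialLinearGroup.coe_mul, mul_inv_cancel,
      Matrix.SpecialLinearGroup.coe_one]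
  set D : Mat F n := Matrix.of fun p q => if p.1 = q.1 then B p.2 q.2 else 0 with hD
  have hDblock : ∀ i j : Fin n, blockOf D i j = if i = j then B else 0 := by
    intro i j
    ext a b
    by_cases h : i = j <;> simp [blockOf, hD, h]
  have hgD : (g : Mat F n) * D = 1 := by
    apply blockOf_ext
    intro i j
    rw [blockOf_mul, blockOf_one, Finset.sum_eq_single i]
    · rw [hA i i, if_pos rfl, hDblock i j]
      by_cases h : i = j <;> simp [h, hAB]
    · intro k _ hk
      rw [hA i k, if_neg (fun h => hk h.symm), zero_mul]
    · exact fun h => absurd (Finset.mem_univ i) h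
  have hginv : ((g⁻¹ : SL2n F n) : Mat F n) = D := by
    calc ((g⁻¹ : SL2n F n) : Mat F n) = (g⁻¹ : SL2n F n) * ((g : Mat F n) * D) := by
          rw [hgD, mul_one]
      _ = (((g⁻¹ * g : SL2n F n)) : Mat F n) * D := by
          rw [Matrix.SpecialLinearGroup.coe_mul, mul_assoc]
      _ = D := by rw [inv_mul_cancel, Matrix.SpecialLinearGroup.coe_one, one_mul]
  have hconj : ∀ (x : SL2n F n) (i j : Fin n),
      bk (g * x * g⁻¹) i j = (A : Matrix (Fin 2) (Fin 2) F) * bk x i j * B := by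
    intro x i j
    show blockOf _ i j = _
    rw [Matrix.SpecialLinearGroup.coe_mul, Matrix.SpecialLinearGroup.coe_mul, hginv,
      blockOf_mul, Finset.sum_eq_single j]
    · rw [hDblock, if_pos rfl, blockOf_mul, Finset.sum_eq_single i]
      · rw [hA, if_pos rfl]; rfl
      · intro k _ hk
        rw [hA i k, if_neg (fun h => hk h.symm), zero_mul]
      · exact fun h => absurd (Finset.mem_univ i) h
    · intro k _ hk
      rw [hDblock, if_neg hk, mul_zero]
    · exact fun h => absurd (Finset.mem_univ j) h
  intro x hx
  replace hx := mem_Nset_iff.mp hx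
  have hsup : ∀ i j : Fin n, (j:ℕ) = (i:ℕ) + 1 → bk (g * x * g⁻¹) i j = bk x i j := by
    intro i j hj
    obtain ⟨a, ha⟩ := hx.2.1 i j hj
    rw [hconj, show bk x i j = a • (1 : Matrix (Fin 2) (Fin 2) F) from ha]
    rw [mul_smul_comm, mul_one, smul_mul_assoc, hAB]
  refine ⟨?_, hsup⟩
  rw [mem_Nset_iff]
  refine ⟨fun i => ?_, fun i j hj => ?_, fun i j hj => ?_⟩
  · rw [hconj, hx.1 i, mul_one, hAB]
  · obtain ⟨a, ha⟩ := hx.2.1 i j hj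
    exact ⟨a, by rw [hsup i j hj]; exact ha⟩
  · rw [hconj, hx.2.2 i j hj, mul_zero, zero_mul]


lemma char2_of_card (hF : Fintype.card F = 4) : (2 : F) = 0 := by
  haveI : CharP F (ringChar F) := ringChar.charP F
  obtain ⟨m, hp, hcard⟩ := FiniteField.card F (ringChar F)
  rw [hF] at hcard
  have hdvd : ringChar F ∣ 4 := hcard ▸ dvd_pow_self (ringChar F) m.2.ne'
  have h4 : (4:ℕ) = 2 ^ 2 := by norm_num
  have hdvd2 : ringChar F ∣ 2 := hp.dvd_of_dvd_pow (h4 ▸ hdvd)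
  have hp2 : ringChar F = 2 := (Nat.prime_dvd_prime_iff_eq hp Nat.prime_two).mp hdvd2
  haveI : CharP F 2 := hp2 ▸ ringChar.charP F
  have := CharP.cast_eq_zero F 2
  exact_mod_cast this

lemma char2_mat (hF : Fintype.card F = 4) : ∀ X : Mat F n, X + X = 0 := by
  intro X
  rw [← two_smul F X, char2_of_card hF, zero_smul]

def bEM (i j : Fin n) : Mat F n :=
  Matrix.single ((i,0) : Fin n × Fin 2) ((j,0) : Fin n × Fin 2) (1:F) +
  Matrix.single ((i,1) : Fin n × Fin 2) ((j,1) : Fin n × Fin 2) 1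

lemma bEM_mul_ne {i j k l : Fin n} (h : j ≠ k) : (bEM i j : Mat F n) * bEM k l = 0 := by
  simp [bEM, add_mul, mul_add, Prod.ext_iff, h]

lemma bEM_mul_same (i j l : Fin n) : (bEM i j : Mat F n) * bEM j l = bEM i l := by
  simp [bEM, add_mul, mul_add, Prod.ext_iff]

lemma blockOf_bEM (i j k l : Fin n) :
    blockOf (bEM i j : Mat F n) k l = if k = i ∧ l = j then 1 else 0 := by
  ext a b
  fin_cases a <;> fin_cases b <;>
    by_cases hk : k = i <;> by_cases hl : l = j <;>
      simp [bEM, Matrix.single, blockOf, Matrix.one_apply, Prod.ext_iff, hk, hl] <;>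
      tauto

lemma one_add_sq (A : Mat F n) (hc : ∀ X : Mat F n, X + X = 0) (hA : A * A = 0) :
    ((1 + A) : Mat F n) * (1 + A) = 1 := by
  have h : ((1 + A) : Mat F n) * (1 + A) = 1 + (A + A) + A * A := by noncomm_ring
  rw [h, hc, hA, add_zero, add_zero]

lemma comm_sq (A B : Mat F n) (hc : ∀ X : Mat F n, X + X = 0)
    (hA : A * A = 0) (hB : B * B = 0) (hBA : B * A = 0) :
    (((1 + A) * (1 + B)) : Mat F n) * ((1 + A) * (1 + B)) = 1 + A * B := by
  have h1 : ((1 + A) : Mat F n) * (1 + B) = 1 + (A + B + A * B) := by noncomm_ring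
  have hAAB : A * (A * B) = 0 := by rw [← mul_assoc, hA, zero_mul]
  have hBAB : B * (A * B) = 0 := by rw [← mul_assoc, hBA, zero_mul]
  have hABA : (A * B) * A = 0 := by rw [mul_assoc, hBA, mul_zero]
  have hABB : (A * B) * B = 0 := by rw [mul_assoc, hB, mul_zero]
  have hABAB : (A * B) * (A * B) = 0 := by rw [← mul_assoc, hABA, zero_mul]
  have h2 : (A + B + A * B) * (A + B + A * B) = A * B := by
    simp only [mul_add, add_mul, hA, hB, hBA, hAAB, hBAB, hABA, hABB, hABAB,
      add_zero, zero_add]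
  have h3 : (1 + (A + B + A * B) : Mat F n) * (1 + (A + B + A * B)) =
      1 + ((A + B + A * B) + (A + B + A * B)) + (A + B + A * B) * (A + B + A * B) := by
    noncomm_ring
  rw [h1, h3, hc, h2, add_zero]

lemma det_one_add_bEM {i j : Fin n} (h : i ≠ j) : ((1 + bEM i j : Mat F n)).det = 1 := by
  set E0 : Mat F n :=
    Matrix.single ((i,0) : Fin n × Fin 2) ((j,0) : Fin n × Fin 2) (1:F) with hE0
  set E1 : Mat F n :=
    Matrix.single ((i,1) : Fin n × Fin 2) ((j,1) : Fin n × Fin 2) (1:F) with hE1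
  have h0 : E0 * E1 = 0 := by
    rw [hE0, hE1]; exact Matrix.single_mul_single_of_ne (h := (by simp : ((j,0) : Fin n × Fin 2) ≠ (i,1))) ..
  have hsplit : (1 + bEM i j : Mat F n) = (1 + E0) * (1 + E1) := by
    have hh : ((1 + E0) : Mat F n) * (1 + E1) = 1 + (E0 + E1) + E0 * E1 := by noncomm_ring
    rw [hh, h0, add_zero]; rfl
  have d0 : (1 + E0 : Mat F n).det = 1 := by
    have : (1 + E0 : Mat F n) =
        Matrix.transvection ((i,0) : Fin n × Fin 2) ((j,0) : Fin n × Fin 2) (1:F) := rfl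
    rw [this]
    exact Matrix.det_transvection_of_ne _ _ (fun hh => h (congrArg Prod.fst hh)) _
  have d1 : (1 + E1 : Mat F n).det = 1 := by
    have : (1 + E1 : Mat F n) =
        Matrix.transvection ((i,1) : Fin n × Fin 2) ((j,1) : Fin n × Fin 2) (1:F) := rfl
    rw [this]
    exact Matrix.det_transvection_of_ne _ _ (fun hh => h (congrArg Prod.fst hh)) _
  rw [hsplit, Matrix.det_mul, d0, d1, one_mul]

def wit (i j : Fin n) (h : i ≠ j) : SL2n F n := ⟨1 + bEM i j, det_one_add_bEM h⟩

lemma bk_wit (i j : Fin n) (h : i ≠ j) (k l : Fin n) :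
    bk (wit i j h) k l =
      (if k = l then (1 : Matrix (Fin 2) (Fin 2) F) else 0) +
      (if k = i ∧ l = j then 1 else 0) := by
  show blockOf ((1 + bEM i j : Mat F n)) k l = _
  have hadd : blockOf ((1 + bEM i j : Mat F n)) k l =
      blockOf (1 : Mat F n) k l + blockOf (bEM i j : Mat F n) k l := by
    ext a b; simp [blockOf, Matrix.add_apply]
  rw [hadd, blockOf_bEM]
  congr 1
  ext a b
  by_cases hkl : k = l <;> simp [hkl, Matrix.one_apply, blockOf, Prod.ext_iff] <;> tauto

lemma wit_mem_Nset (i j : Fin n) (h : i ≠ j) (hij : (j:ℕ) = (i:ℕ) + 1) :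
    wit i j h ∈ NsetN F n := by
  refine ⟨fun k => ?_, fun k l hkl => ?_, fun k l hkl => ?_⟩
  · show bk (wit i j h) k k = 1
    rw [bk_wit, if_pos rfl, if_neg, add_zero]
    rintro ⟨h1, h2⟩; exact h (h1 ▸ h2 ▸ rfl)
  · show ∃ a : F, bk (wit i j h) k l = a • 1
    have hkl' : k ≠ l := fun hh => by rw [hh] at hkl; omega
    by_cases hcase : k = i ∧ l = j
    · exact ⟨1, by rw [bk_wit, if_neg hkl', if_pos hcase, zero_add, one_smul]⟩
    · exact ⟨0, by rw [bk_wit, if_neg hkl', if_neg hcase, zero_add, zero_smul]⟩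
  · show bk (wit i j h) k l = 0
    have hkl' : k ≠ l := fun hh => by rw [hh] at hkl; omega
    rw [bk_wit, if_neg hkl', if_neg, add_zero]
    rintro ⟨h1, h2⟩
    rw [h1, h2] at hkl
    omega

lemma sl_inv_self {w : SL2n F n} (hc : ∀ X : Mat F n, X + X = 0)
    {A : Mat F n} (hA : A * A = 0) (hw : (w : Mat F n) = 1 + A) : w⁻¹ = w := by
  apply inv_eq_of_mul_eq_one_right
  apply Subtype.ext
  show ((w * w : SL2n F n) : Mat F n) = ((1 : SL2n F n) : Mat F n)
  rw [Matrix.SpecialLinearGroup.coe_mul, hw, Matrix.SpecialLinearGroup.coe_one]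
  exact one_add_sq _ hc hA

lemma fin_mk_ne {a b : ℕ} {ha : a < n} {hb : b < n} (h : a ≠ b) :
    (⟨a, ha⟩ : Fin n) ≠ ⟨b, hb⟩ := fun hh => h (congrArg Fin.val hh)

lemma witness (hc : ∀ X : Mat F n, X + X = 0) :
    ∀ k : ℕ, ∀ hk : k + 1 < n, ∃ w : SL2n F n,
      w ∈ gammaN (Subgroup.closure (NsetN F n)) k ∧
      (w : Mat F n) = 1 + bEM ⟨0, by omega⟩ ⟨k+1, hk⟩ := by
  intro k
  induction k with
  | zero =>
    intro hk
    refine ⟨wit ⟨0, by omega⟩ ⟨1, hk⟩ (fin_mk_ne (by omega)), ?_, rfl⟩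
    show _ ∈ Subgroup.closure (NsetN F n)
    exact Subgroup.subset_closure (wit_mem_Nset _ _ _ rfl)
  | succ k ih =>
    intro hk
    have hk' : k + 1 < n := by omega
    obtain ⟨w, hwmem, hwmat⟩ := ih hk'
    have hne : (⟨k+1, hk'⟩ : Fin n) ≠ ⟨k+2, hk⟩ := fin_mk_ne (by omega)
    refine ⟨⁅w, wit ⟨k+1, hk'⟩ ⟨k+2, hk⟩ hne⁆, ?_, ?_⟩
    · show _ ∈ ⁅gammaN (Subgroup.closure (NsetN F n)) k, Subgroup.closure (NsetN F n)⁆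
      exact Subgroup.commutator_mem_commutator hwmem
        (Subgroup.subset_closure (wit_mem_Nset _ _ _ rfl))
    · have hA : (bEM ⟨0, by omega⟩ ⟨k+1, hk'⟩ : Mat F n) * bEM ⟨0, by omega⟩ ⟨k+1, hk'⟩ = 0 :=
        bEM_mul_ne (fin_mk_ne (by omega))
      have hwinv : w⁻¹ = w := sl_inv_self hc hA hwmat
      have heinv : (wit (⟨k+1, hk'⟩ : Fin n) ⟨k+2, hk⟩ hne)⁻¹ = wit ⟨k+1, hk'⟩ ⟨k+2, hk⟩ hne :=
        sl_inv_self hc (bEM_mul_ne hne.symm) rfl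
      have hcomm : ⁅w, wit (⟨k+1, hk'⟩ : Fin n) ⟨k+2, hk⟩ hne⁆ =
          (w * wit ⟨k+1, hk'⟩ ⟨k+2, hk⟩ hne) * (w * wit ⟨k+1, hk'⟩ ⟨k+2, hk⟩ hne) := by
        rw [commutatorElement_def, hwinv, heinv]
        exact mul_assoc _ _ _
      rw [hcomm, Matrix.SpecialLinearGroup.coe_mul, Matrix.SpecialLinearGroup.coe_mul, hwmat]
      show ((1 + bEM ⟨0, _⟩ ⟨k+1, hk'⟩) * (1 + bEM ⟨k+1, hk'⟩ ⟨k+2, hk⟩) : Mat F n) *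
          ((1 + bEM ⟨0, _⟩ ⟨k+1, hk'⟩) * (1 + bEM ⟨k+1, hk'⟩ ⟨k+2, hk⟩)) = _
      rw [comm_sq _ _ hc hA (bEM_mul_ne hne.symm) (bEM_mul_ne (fin_mk_ne (by omega))),
        bEM_mul_same]
  

lemma Mset_subset_Z0 : MsetN F n ⊆ Zset F n 0 := by
  rintro x ⟨hd, _, hb⟩
  exact ⟨hd, fun i j hij hle => hb i j (by
    have := fun hv => hij (Fin.val_injective hv)
    omega)⟩

lemma Nset_one : (1 : SL2n F n) ∈ NsetN F n := by
  rw [mem_Nset_iff]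
  refine ⟨fun i => by rw [bk_one, if_pos rfl], fun i j hj =>
    ⟨0, by rw [bk_one, if_neg (fun h => by rw [h] at hj; omega), zero_smul]⟩,
    fun i j hj => by rw [bk_one, if_neg (fun h => by rw [h] at hj; omega)]⟩

lemma Nset_mul {x y : SL2n F n} (hx : x ∈ NsetN F n) (hy : y ∈ NsetN F n) :
    x * y ∈ NsetN F n := by
  have hx0 := Nset_subset_Z0 hx
  have hy0 := Nset_subset_Z0 hy
  have hz := Zset_mul hx0 hy0
  rw [mem_Nset_iff]
  refine ⟨hz.1, fun i j hj => ?_, fun i j hj => hz.2 i j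
    (fun h => by rw [h] at hj; omega) (by omega)⟩
  obtain ⟨a, ha⟩ := (mem_Nset_iff.mp hx).2.1 i j hj
  obtain ⟨b, hb⟩ := (mem_Nset_iff.mp hy).2.1 i j hj
  exact ⟨a + b, by rw [superdiag_add hx0 hy0 hj, ha, hb, add_smul]⟩

lemma part1 : (Subgroup.closure (NsetN F n) : Set (SL2n F n)) = NsetN F n :=
  coe_closure_setSubgroup _ Nset_one (fun _ hx _ hy => Nset_mul hx hy)

lemma G_conj : ∀ g ∈ GsubN F n, Pconj g := by
  intro g hg
  have hle : GsubN F n ≤ setSubgroup {g : SL2n F n | Pconj g} Pconj_one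
      (fun _ ha _ hb => Pconj_mul ha hb) := by
    apply (Subgroup.closure_le _).mpr
    rintro y (hy | hy)
    · exact Pconj_of_H hy
    · exact Pconj_of_Z0 (Mset_subset_Z0 hy)
  exact hle hg

lemma mem_Nset_of_closure {x : SL2n F n} (hx : x ∈ Subgroup.closure (NsetN F n)) :
    x ∈ NsetN F n := by
  rw [← part1]; exact hx

lemma iter_le_gamma :
    ∀ e : ℕ, iterCommG (GsubN F n) (Subgroup.closure (NsetN F n)) (e+1) ≤
      gammaN (Subgroup.closure (NsetN F n)) e := by
  intro e
  induction e with
  | zero =>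
    show ⁅iterCommG (GsubN F n) _ 0, Subgroup.closure (NsetN F n)⁆ ≤ Subgroup.closure (NsetN F n)
    apply Subgroup.commutator_le.mpr
    intro g hg x hx
    have hx' : x ∈ NsetN F n := mem_Nset_of_closure hx
    rw [commutatorElement_def]
    exact mul_mem (Subgroup.subset_closure ((G_conj g hg x hx').1)) (inv_mem hx)
  | succ e ih =>
    show ⁅iterCommG (GsubN F n) _ (e+1), Subgroup.closure (NsetN F n)⁆ ≤
      ⁅gammaN (Subgroup.closure (NsetN F n)) e, Subgroup.closure (NsetN F n)⁆
    exact Subgroup.commutator_mono ih le_rfl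

lemma iter_le_Z :
    ∀ e : ℕ, ∀ x, x ∈ iterCommG (GsubN F n) (Subgroup.closure (NsetN F n)) (e+1) →
      x ∈ Zset F n (e+1) := by
  intro e
  induction e with
  | zero =>
    intro z hz
    have hle : iterCommG (GsubN F n) (Subgroup.closure (NsetN F n)) 1 ≤
        setSubgroup (Zset F n 1) (Zset_one 1) (fun _ ha _ hb => Zset_mul ha hb) := by
      apply Subgroup.commutator_le.mpr
      intro g hg x hx
      have hx' : x ∈ NsetN F n := mem_Nset_of_closure hx
      obtain ⟨hmem, hsup⟩ := G_conj g hg x hx'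
      show ⁅g, x⁆ ∈ Zset F n 1
      have hu0 : g * x * g⁻¹ ∈ Zset F n 0 := Nset_subset_Z0 hmem
      have hx0 : x ∈ Zset F n 0 := Nset_subset_Z0 hx'
      have hxi : x⁻¹ ∈ Zset F n 0 := Zset_inv hx0
      have hprod := Zset_mul hu0 hxi
      rw [commutatorElement_def]
      refine ⟨hprod.1, ?_⟩
      intro i j hij hle
      by_cases hj : (j:ℕ) = (i:ℕ) + 1
      · rw [superdiag_add hu0 hxi hj, hsup i j hj, ← superdiag_add hx0 hxi hj,
          mul_inv_cancel, bk_one, if_neg hij]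
      · exact hprod.2 i j hij (by omega)
    exact hle hz
  | succ e ih =>
    intro z hz
    have hle : iterCommG (GsubN F n) (Subgroup.closure (NsetN F n)) (e+2) ≤
        setSubgroup (Zset F n (e+2)) (Zset_one _) (fun _ ha _ hb => Zset_mul ha hb) := by
      apply Subgroup.commutator_le.mpr
      intro a ha b hb
      have ha' : a ∈ Zset F n (e+1) := ih a ha
      have hb' : b ∈ Zset F n 0 := Nset_subset_Z0 (mem_Nset_of_closure hb)
      show ⁅a, b⁆ ∈ Zset F n (e+2)
      exact comm_mem_Zset ha' hb'
    exact hle hz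

lemma blockOf_one_add_bEM (i j k l : Fin n) (h : i ≠ j) :
    blockOf ((1 + bEM i j : Mat F n)) k l =
      (if k = l then (1 : Matrix (Fin 2) (Fin 2) F) else 0) +
      (if k = i ∧ l = j then 1 else 0) := bk_wit i j h k l

end SLaux

/-- **Lemma SL2n (3),(4).** -/
theorem NsetN_normal_and_gamma_gt_iterComm
    (F : Type*) [Field F] [Fintype F] (hF : Fintype.card F = 4)
    (n : ℕ) (hn : 0 < n) :
    ((Subgroup.closure (NsetN F n) : Set (SL2n F n)) = NsetN F n) ∧
    (∀ g ∈ GsubN F n, ∀ x ∈ NsetN F n, g * x * g⁻¹ ∈ NsetN F n) ∧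
    ∀ d : ℕ, 1 ≤ d → d < n →
      iterCommG (GsubN F n) (Subgroup.closure (NsetN F n)) d <
        gammaN (Subgroup.closure (NsetN F n)) (d - 1) := by
  refine ⟨SLaux.part1, fun g hg x hx => (SLaux.G_conj g hg x hx).1, ?_⟩
  intro d hd1 hdn
  obtain ⟨e, rfl⟩ : ∃ e, d = e + 1 := ⟨d - 1, by omega⟩
  have hsub : e + 1 - 1 = e := by omega
  rw [hsub]
  refine lt_of_le_not_ge (SLaux.iter_le_gamma e) ?_
  intro hcon
  obtain ⟨w, hwmem, hwmat⟩ := SLaux.witness (SLaux.char2_mat hF) e hdn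
  have hw2 : w ∈ SLaux.Zset F n (e+1) := SLaux.iter_le_Z e w (hcon hwmem)
  have hne : (⟨0, by omega⟩ : Fin n) ≠ ⟨e+1, by omega⟩ := SLaux.fin_mk_ne (by omega)
  have hzero := hw2.2 ⟨0, by omega⟩ ⟨e+1, by omega⟩ hne (by simp)
  have hone : SLaux.bk w ⟨0, by omega⟩ ⟨e+1, by omega⟩ = 1 := by
    unfold SLaux.bk
    rw [hwmat, SLaux.blockOf_one_add_bEM _ _ _ _ hne, if_neg hne, if_pos ⟨rfl, rfl⟩, zero_add]
  rw [hzero] at hone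
  have := congrFun (congrFun hone 0) 0
  simp [Matrix.one_apply] at this
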